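/- arXiv:2202.09832 — 3 statements merged into one kernel-verified Lean document; each statement's English description precedes it below -/
import Mathlib

section
/- Define a sequence by a_0 = 0 and a_{n+1} = sqrt(a_n + 2). Then (2 - a_n) · 4^n converges to π²/4 as n → ∞. -/
open Real Filter

lemma viete_closed_form (a : ℕ → ℝ) (h0 : a 0 = 0)
    (hrec : ∀ n, a (n + 1) = Real.sqrt (a n + 2)) (n : ℕ) :
    a n = 2 * Real.cos (π / 2 ^ (n + 1)) := by
  induction n with
  | zero => simp [h0, Real.cos_pi_div_two]
  | succ n ih =>
      have hθ : π / 2 ^ (n + 1) / 2 = π / 2 ^ (n + 2) := by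
        rw [div_div]; ring_nf
      have hnn : 0 ≤ Real.cos (π / 2 ^ (n + 2)) := by
        apply Real.cos_nonneg_of_mem_Icc
        constructor
        · have := Real.pi_pos
          have h2 : (0:ℝ) < 2 ^ (n + 2) := by positivity
          nlinarith [div_nonneg (le_of_lt this) (le_of_lt h2)]
        · rw [div_le_div_iff₀ (by positivity) (by norm_num)]
          have : (2:ℝ) ≤ 2 ^ (n + 2) := by
            calc (2:ℝ) ≤ 2 ^ 1 := by norm_num
            _ ≤ 2 ^ (n + 2) := by
              apply pow_le_pow_right₀ (by norm_num) (by omega)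
          nlinarith [Real.pi_pos]
      have hsq : a n + 2 = (2 * Real.cos (π / 2 ^ (n + 2))) ^ 2 := by
        have h2x : 2 * (π / 2 ^ (n + 2)) = π / 2 ^ (n + 1) := by
          rw [eq_div_iff (by positivity : (2:ℝ)^(n+1) ≠ 0)]
          field_simp; ring
        have := Real.cos_sq (π / 2 ^ (n + 2))
        rw [h2x] at this
        nlinarith [this, ih]
      rw [hrec, hsq, Real.sqrt_sq (by positivity)]

theorem viete_rate_of_convergence
    (a : ℕ → ℝ) (h0 : a 0 = 0)
    (hrec : ∀ n, a (n + 1) = Real.sqrt (a n + 2)) :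
    Filter.Tendsto (fun n => (2 - a n) * 4 ^ n) Filter.atTop
      (nhds (Real.pi ^ 2 / 4)) := by
  have key : ∀ n, (2 - a n) * 4 ^ n
      = (2 ^ (n + 1) * Real.sin (π / 2 ^ (n + 2))) ^ 2 := by
    intro n
    rw [viete_closed_form a h0 hrec n]
    have hθ : π / 2 ^ (n + 1) / 2 = π / 2 ^ (n + 2) := by
      rw [div_div]; ring_nf
    have h2x : 2 * (π / 2 ^ (n + 2)) = π / 2 ^ (n + 1) := by
      rw [eq_div_iff (by positivity : (2:ℝ)^(n+1) ≠ 0)]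
      field_simp; ring
    have hs := Real.sin_sq_eq_half_sub (π / 2 ^ (n + 2))
    rw [h2x] at hs
    have h4 : (4:ℝ) ^ n = (2 ^ (n+1))^2 / 4 := by
      rw [← pow_mul]
      rw [show (4:ℝ) = 2^2 by norm_num, ← pow_mul]
      ring_nf
    rw [h4, mul_pow, hs]
    ring
  simp only [key]
  have hx : Tendsto (fun n : ℕ => π / 2 ^ (n + 2)) atTop (nhds 0) := by
    apply Tendsto.div_atTop tendsto_const_nhds
    exact (tendsto_pow_atTop_atTop_of_one_lt (by norm_num : (1:ℝ) < 2)).comp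
      (tendsto_add_atTop_nat 2)
  have hx' : Tendsto (fun n : ℕ => π / 2 ^ (n + 2)) atTop (nhdsWithin 0 {0}ᶜ) := by
    apply tendsto_nhdsWithin_of_tendsto_nhds_of_eventually_within _ hx
    filter_upwards with n
    have : π / 2 ^ (n + 2) ≠ 0 := by positivity
    simpa using this
  have hslope : Tendsto (fun x : ℝ => Real.sin x / x) (nhdsWithin 0 {0}ᶜ) (nhds 1) := by
    have h := (Real.hasDerivAt_sin 0)
    rw [hasDerivAt_iff_tendsto_slope] at h
    rw [Real.cos_zero] at h
    convert h using 1
    funext x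
    simp [slope_def_field]
  have hmain : Tendsto (fun n : ℕ => 2 ^ (n + 1) * Real.sin (π / 2 ^ (n + 2)))
      atTop (nhds (π / 2)) := by
    have heq : ∀ n : ℕ, 2 ^ (n + 1) * Real.sin (π / 2 ^ (n + 2))
        = (π / 2) * (Real.sin (π / 2 ^ (n + 2)) / (π / 2 ^ (n + 2))) := by
      intro n
      have hpi := Real.pi_ne_zero
      have h2 : (2:ℝ) ^ (n + 2) ≠ 0 := by positivity
      field_simp
      ring
    simp only [heq]
    have := (hslope.comp hx').const_mul (π / 2)
    simpa using this
  have := (hmain.pow 2)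
  convert this using 2
  rw [div_pow]
  norm_num
end

section
/- Let f(z) = z² + c, p a repelling fixed point with multiplier μ = 2p, and let g be the local inverse branch of f fixing p as above. If q is in the domain of linearization, then the rescaled backward orbit μ^n (g^n(q) - p) converges to a limit in ℂ as n → ∞ (Koenigs linearization along the backward orbit). -/
theorem koenigs_along_backward_orbit
    (c p : ℂ) (f : ℂ → ℂ) (hf : ∀ z, f z = z ^ 2 + c)
    (hfix : p ^ 2 + c = p) (hrep : 1 < ‖2 * p‖)
    (ε : ℝ) (hε : 0 < ε) (lam : ℝ) (hlam : 1 < lam)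
    (g : ℂ → ℂ) (hgp : g p = p)
    (hg : ∀ z ∈ Metric.ball p ε, f (g z) = z ∧ g z ∈ Metric.ball p ε ∧
      ‖g z - p‖ ≤ (1 / lam) * ‖z - p‖) :
    ∀ q ∈ Metric.ball p ε, ∃ L : ℂ,
      Filter.Tendsto (fun n : ℕ => (2 * p) ^ n * (g^[n] q - p))
        Filter.atTop (nhds L) := by
  intro q hq
  have hlam0 : (0:ℝ) < lam := lt_trans one_pos hlam
  set r : ℝ := 1 / lam with hrdef
  have hr0 : 0 < r := by positivity
  have hr1 : r < 1 := by rw [hrdef, div_lt_one hlam0]; exact hlam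
  set a : ℕ → ℂ := fun n => (2 * p) ^ n * (g^[n] q - p) with hadef
  -- membership and geometric decay of the backward orbit
  have hmem : ∀ n, g^[n] q ∈ Metric.ball p ε ∧
      ‖g^[n] q - p‖ ≤ ε * r ^ n := by
    intro n
    induction n with
    | zero =>
      refine ⟨by simpa using hq, ?_⟩
      have : ‖q - p‖ < ε := by
        rw [← Complex.dist_eq]; simpa [Metric.mem_ball] using hq
      simpa using this.le
    | succ n ih =>
      obtain ⟨hball, habs⟩ := ih
      obtain ⟨-, hball', hcontr⟩ := hg _ hball
      rw [Function.iterate_succ_apply']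
      refine ⟨hball', ?_⟩
      calc ‖g (g^[n] q) - p‖
          ≤ (1 / lam) * ‖g^[n] q - p‖ := hcontr
        _ ≤ (1 / lam) * (ε * r ^ n) := by
            apply mul_le_mul_of_nonneg_left habs (by positivity)
        _ = ε * r ^ (n + 1) := by rw [hrdef]; ring
  -- key algebraic recurrence
  have hrec : ∀ n, g^[n] q - p =
      (g^[n+1] q - p) ^ 2 + 2 * p * (g^[n+1] q - p) := by
    intro n
    obtain ⟨hfg, -, -⟩ := hg _ (hmem n).1
    rw [hf] at hfg
    rw [Function.iterate_succ_apply']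
    linear_combination hfix - hfg
  -- telescoping difference
  have hdiff : ∀ n, a (n + 1) - a n = -((2 * p) ^ n * (g^[n+1] q - p) ^ 2) := by
    intro n
    simp only [hadef]
    linear_combination (-(2*p)^n) * hrec n
  -- bound on the difference in terms of |a n|
  have hstep : ∀ n, ‖a (n + 1) - a n‖ ≤
      ‖a n‖ * (ε * r ^ (n + 2)) := by
    intro n
    rw [hdiff n, norm_neg]
    have hcontr := (hg _ (hmem n).1).2.2
    have hW : ‖g^[n+1] q - p‖ ≤ (1/lam) * ‖g^[n] q - p‖ := by
      rw [Function.iterate_succ_apply']; exact hcontr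
    have hWe : ‖g^[n+1] q - p‖ ≤ ε * r ^ (n+1) := (hmem (n+1)).2
    have expand : ‖(2*p)^n * (g^[n+1] q - p)^2‖
        = ‖2*p‖ ^ n * (‖g^[n+1] q - p‖ * ‖g^[n+1] q - p‖) := by
      simp only [norm_mul, norm_pow]; ring
    have han : ‖a n‖ = ‖2*p‖ ^ n * ‖g^[n] q - p‖ := by
      simp only [hadef, norm_mul, norm_pow]
    rw [expand, han]
    calc ‖2*p‖ ^ n * (‖g^[n+1] q - p‖ * ‖g^[n+1] q - p‖)
        ≤ ‖2*p‖ ^ n * (((1/lam) * ‖g^[n] q - p‖) * (ε * r ^ (n+1))) := by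
          have h0 : (0:ℝ) ≤ ‖2*p‖ ^ n := by positivity
          apply mul_le_mul_of_nonneg_left _ h0
          exact mul_le_mul hW hWe (norm_nonneg _) (by positivity)
      _ = ‖2*p‖ ^ n * ‖g^[n] q - p‖ * (ε * r ^ (n+2)) := by
          rw [hrdef]; ring
  -- uniform bound on |a n|
  have hSbound : ∀ n : ℕ, (∑ i ∈ Finset.range n, r ^ i) ≤ 1 / (1 - r) := by
    intro n
    have h1 : (0:ℝ) < 1 - r := by linarith
    rw [geom_sum_eq hr1.ne]
    have heq : (r ^ n - 1) / (r - 1) = (1 - r ^ n) / (1 - r) := by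
      rw [div_eq_div_iff (by linarith) (by linarith)]; ring
    rw [heq]
    gcongr
    · have : (0:ℝ) ≤ r ^ n := by positivity
      linarith
  have hbound : ∀ n, ‖a n‖ ≤
      ε * Real.exp (ε * ∑ i ∈ Finset.range n, r ^ i) := by
    intro n
    induction n with
    | zero =>
      simp only [hadef, pow_zero, one_mul, Function.iterate_zero_apply,
        Finset.range_zero, Finset.sum_empty, mul_zero, Real.exp_zero, mul_one]
      have : ‖q - p‖ < ε := by
        rw [← Complex.dist_eq]; simpa [Metric.mem_ball] using hq
      exact this.le
    | succ n ih =>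
      have h1 : ‖a (n+1)‖ ≤ ‖a n‖ + ‖a (n+1) - a n‖ := by
        calc ‖a (n+1)‖ = ‖a n + (a (n+1) - a n)‖ := by ring_nf
          _ ≤ _ := norm_add_le _ _
      have h2 : ‖a (n+1)‖ ≤ ‖a n‖ * (1 + ε * r ^ n) := by
        have h3 := hstep n
        have h4 : ε * r ^ (n+2) ≤ ε * r ^ n := by
          apply mul_le_mul_of_nonneg_left _ hε.le
          exact pow_le_pow_of_le_one hr0.le hr1.le (by omega)
        nlinarith [norm_nonneg (a n)]
      have h5 : (1:ℝ) + ε * r ^ n ≤ Real.exp (ε * r ^ n) :=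
        Real.add_one_le_exp _ |>.trans_eq' (by ring)
      calc ‖a (n+1)‖ ≤ ‖a n‖ * (1 + ε * r ^ n) := h2
        _ ≤ (ε * Real.exp (ε * ∑ i ∈ Finset.range n, r ^ i)) * Real.exp (ε * r ^ n) := by
            apply mul_le_mul ih h5 (by positivity) (by positivity)
        _ = ε * Real.exp (ε * ∑ i ∈ Finset.range (n+1), r ^ i) := by
            rw [Finset.sum_range_succ, mul_add, Real.exp_add]; ring
  set B : ℝ := ε * Real.exp (ε * (1 / (1 - r))) with hB
  have hBbound : ∀ n, ‖a n‖ ≤ B := by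
    intro n
    refine (hbound n).trans ?_
    rw [hB]
    apply mul_le_mul_of_nonneg_left _ hε.le
    apply Real.exp_le_exp.mpr
    exact mul_le_mul_of_nonneg_left (hSbound n) hε.le
  -- Cauchy sequence
  have hcauchy : CauchySeq a := by
    apply cauchySeq_of_le_geometric r (B * ε)
    · exact hr1
    · intro n
      rw [dist_comm, Complex.dist_eq]
      calc ‖a (n+1) - a n‖ ≤ ‖a n‖ * (ε * r ^ (n+2)) := hstep n
        _ ≤ B * (ε * r ^ n) := by
            have h4 : r ^ (n+2) ≤ r ^ n := pow_le_pow_of_le_one hr0.le hr1.le (by omega)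
            exact mul_le_mul (hBbound n)
              (mul_le_mul_of_nonneg_left h4 hε.le) (by positivity) (by positivity)
        _ = B * ε * r ^ n := by ring
  obtain ⟨L, hL⟩ := cauchySeq_tendsto_of_complete hcauchy
  exact ⟨L, hL⟩
end

section
/- Suppose f : ℂ → ℂ is holomorphic, p is a fixed point with |f'(p)| > 1, and (q_n) is a sequence with f(q_{n+1}) = q_n for all n and q_n → p with q_n ≠ p for all n. Then the sequence μ^n (q_n - p), where μ = f'(p), is bounded. -/
set_option maxHeartbeats 1000000 in
theorem rescaled_backward_orbit_bounded
    (f : ℂ → ℂ) (p : ℂ) (hf : AnalyticAt ℂ f p) (hp : f p = p)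
    (μ : ℂ) (hμ : μ = deriv f p) (hrep : 1 < ‖μ‖)
    (q : ℕ → ℂ) (hback : ∀ n, f (q (n + 1)) = q n)
    (hlim : Filter.Tendsto q Filter.atTop (nhds p))
    (hne : ∀ n, q n ≠ p) :
    ∃ C : ℝ, ∀ n : ℕ, ‖μ ^ n * (q n - p)‖ ≤ C := by
  set c : ℝ := ‖μ‖ with hc
  have hc1 : 1 < c := hrep
  have hc0 : 0 < c := lt_trans one_pos hc1
  set g : ℂ → ℂ := dslope f p with hg
  have hgp : g p = μ := by rw [hg, dslope_same, hμ]
  have hkey : ∀ z : ℂ, f z - p = (z - p) * g z := by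
    intro z
    have := sub_smul_dslope f p z
    rw [smul_eq_mul] at this
    rw [← hg] at this
    rw [hp] at this; exact this.symm

  -- analyticity of g
  obtain ⟨ps, hps⟩ := hf
  have hga : AnalyticAt ℂ g p := ⟨_, hps.has_fpower_series_dslope_fslope⟩
  have hgc : ContDiffAt ℂ 1 g p := hga.contDiffAt
  obtain ⟨K, t, ht, hK⟩ := hgc.exists_lipschitzOnWith
  set L : ℝ := (K : ℝ) with hL
  have hL0 : 0 ≤ L := K.coe_nonneg
  obtain ⟨r₀, hr₀pos, hballt⟩ := Metric.mem_nhds_iff.mp ht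
  set ε : ℝ := (c - 1) / 2 with hε
  have hεpos : 0 < ε := by simp only [hε]; linarith
  set s : ℝ := (c + 1) / 2 with hs
  have hs1 : 1 < s := by simp only [hs]; linarith
  have hs0 : 0 < s := lt_trans one_pos hs1
  set r : ℝ := min r₀ (ε / (L + 1)) with hr
  have hrpos : 0 < r := lt_min hr₀pos (div_pos hεpos (by linarith))
  -- estimate on g near p
  have hglip : ∀ z ∈ Metric.ball p r, ‖g z - μ‖ ≤ L * ‖z - p‖ := by
    intro z hz
    have hzt : z ∈ t := hballt (Metric.ball_subset_ball (min_le_left _ _) hz)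
    have hpt : p ∈ t := hballt (Metric.mem_ball_self (lt_of_lt_of_le hrpos (min_le_left _ _)))
    have := hK hzt hpt
    rw [edist_dist, edist_dist, ← ENNReal.ofReal_coe_nnreal, ← ENNReal.ofReal_mul K.coe_nonneg]
      at this
    have h2 := (ENNReal.ofReal_le_ofReal_iff (by positivity)).mp this
    simpa [Complex.dist_eq, hgp] using h2
  have hgsmall : ∀ z ∈ Metric.ball p r, ‖g z - μ‖ ≤ ε := by
    intro z hz
    refine le_trans (hglip z hz) ?_
    have hzr : ‖z - p‖ ≤ r := le_of_lt (by simpa [Complex.dist_eq] using hz)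
    have hrε : r ≤ ε / (L + 1) := min_le_right _ _
    have habs0 : 0 ≤ ‖z - p‖ := norm_nonneg _
    have : L * ‖z - p‖ ≤ L * (ε / (L + 1)) := by
      apply mul_le_mul_of_nonneg_left (le_trans hzr hrε) hL0
    refine le_trans this ?_
    rw [div_eq_inv_mul, ← mul_assoc]
    have h1 : L * (L + 1)⁻¹ ≤ 1 := by
      rw [mul_inv_le_iff₀ (by linarith)]; linarith
    nlinarith [hεpos.le]
  have hglower : ∀ z ∈ Metric.ball p r, s ≤ ‖g z‖ := by
    intro z hz
    have h1 := hgsmall z hz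
    have h2 : c - ‖g z - μ‖ ≤ ‖g z‖ := by
      have h3 : c ≤ ‖g z‖ + ‖g z - μ‖ := by
        calc c = ‖g z + (μ - g z)‖ := by rw [show g z + (μ - g z) = μ by ring]
          _ ≤ ‖g z‖ + ‖μ - g z‖ := norm_add_le _ _
          _ = ‖g z‖ + ‖g z - μ‖ := by rw [norm_sub_rev]
      linarith
    simp only [hs, hε] at *
    linarith
  -- get N
  obtain ⟨N, hN⟩ := Filter.eventually_atTop.mp (hlim (Metric.ball_mem_nhds p hrpos))
  set d : ℕ → ℝ := fun n => ‖q n - p‖ with hd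
  have hd0 : ∀ n, 0 ≤ d n := fun n => norm_nonneg _
  have hdpos : ∀ n, 0 < d n := by
    intro n
    simp only [hd]
    rw [norm_pos_iff]
    exact sub_ne_zero_of_ne (hne n)
  set T : ℝ := 2 * L / c * d N / (s - 1) with hT
  have hT0 : 0 ≤ T := by
    apply div_nonneg _ (by linarith)
    apply mul_nonneg _ (hd0 N)
    positivity
  -- the key step estimate
  have hstep : ∀ n, N ≤ n → d n = d (n + 1) * ‖g (q (n + 1))‖ ∧
      (n + 1 ≥ N → c * d (n + 1) ≤ d n * Real.exp (2 * L / c * d (n + 1))) := by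
    intro n hn
    have hrel : d n = d (n + 1) * ‖g (q (n + 1))‖ := by
      simp only [hd]
      rw [← norm_mul, ← hkey, hback]
    constructor
    · exact hrel
    · intro hn1
      have hzball : q (n + 1) ∈ Metric.ball p r := hN _ hn1
      set z := q (n + 1) with hz
      set x : ℝ := L * d (n + 1) with hxd
      have hx0 : 0 ≤ x := mul_nonneg hL0 (hd0 _)
      have hxε : x ≤ ε := by
        have h1 := hglip z hzball
        calc x = L * ‖z - p‖ := rfl
          _ ≤ L * r := by
              apply mul_le_mul_of_nonneg_left (le_of_lt (by simpa [Complex.dist_eq] using hzball)) hL0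
          _ ≤ ε := by
              have hrε : r ≤ ε / (L + 1) := min_le_right _ _
              have : L * r ≤ L * (ε / (L + 1)) := mul_le_mul_of_nonneg_left hrε hL0
              refine le_trans this ?_
              rw [div_eq_inv_mul, ← mul_assoc]
              have h1 : L * (L + 1)⁻¹ ≤ 1 := by
                rw [mul_inv_le_iff₀ (by linarith)]; linarith
              nlinarith [hεpos.le]
      have hxc : x ≤ c / 2 := by simp only [hε] at hxε; linarith
      have hglo : c - x ≤ ‖g z‖ := by
        have h1 := hglip z hzball
        have h2 : c - ‖g z - μ‖ ≤ ‖g z‖ := by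
          have h3 : c ≤ ‖g z‖ + ‖g z - μ‖ := by
            calc c = ‖g z + (μ - g z)‖ := by rw [show g z + (μ - g z) = μ by ring]
              _ ≤ ‖g z‖ + ‖μ - g z‖ := norm_add_le _ _
              _ = ‖g z‖ + ‖g z - μ‖ := by rw [norm_sub_rev]
          linarith
        simp only [hxd, hd] at *
        linarith
      have hexp : 1 + 2 * x / c ≤ Real.exp (2 * x / c) := by
        have := Real.add_one_le_exp (2 * x / c)
        linarith
      have hcore : c ≤ ‖g z‖ * Real.exp (2 * L / c * d (n + 1)) := by
        have harg : 2 * L / c * d (n + 1) = 2 * x / c := by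
          simp only [hxd]; ring
        rw [harg]
        have hgz0 : (0:ℝ) ≤ ‖g z‖ := norm_nonneg _
        have h1 : (c - x) * (1 + 2 * x / c) ≤ ‖g z‖ * Real.exp (2 * x / c) := by
          apply mul_le_mul hglo hexp (by positivity) hgz0
        have h2 : c ≤ (c - x) * (1 + 2 * x / c) := by
          have hcne : c ≠ 0 := ne_of_gt hc0
          rw [mul_add, mul_one]
          have : (c - x) * (2 * x / c) = 2 * x - 2 * x * x / c := by field_simp
          rw [this]
          have h3 : 2 * x * x / c ≤ x := by
            rw [div_le_iff₀ hc0]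
            nlinarith
          linarith
        linarith
      rw [hrel]
      calc c * d (n + 1) ≤ d (n + 1) * (‖g z‖ * Real.exp (2 * L / c * d (n + 1))) := by
            rw [mul_comm c]
            exact mul_le_mul_of_nonneg_left hcore (hd0 _)
        _ = d (n + 1) * ‖g z‖ * Real.exp (2 * L / c * d (n + 1)) := by ring
  -- main induction
  have hmain : ∀ m : ℕ, d (N + m) ≤ d N * (1 / s) ^ m ∧
      c ^ (N + m) * d (N + m) ≤ c ^ N * d N * Real.exp (T * (1 - (1 / s) ^ m)) := by
    intro m
    induction m with
    | zero => simp
    | succ m ih =>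
      obtain ⟨ih1, ih2⟩ := ih
      have hn1 : N + (m + 1) ≥ N := by omega
      have heq : N + (m + 1) = (N + m) + 1 := by omega
      obtain ⟨hst1, hst2⟩ := hstep (N + m) (by omega)
      have hst2' := hst2 (by omega)
      have hzball : q (N + m + 1) ∈ Metric.ball p r := hN _ (by omega)
      have hglo := hglower _ hzball
      have hd1 : d (N + (m + 1)) ≤ d N * (1 / s) ^ (m + 1) := by
        rw [heq]
        have h1 : s * d (N + m + 1) ≤ d (N + m) := by
          calc s * d (N + m + 1) ≤ ‖g (q (N + m + 1))‖ * d (N + m + 1) := by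
                apply mul_le_mul_of_nonneg_right hglo (hd0 _)
            _ = d (N + m + 1) * ‖g (q (N + m + 1))‖ := by ring
            _ = d (N + m) := hst1.symm
        have h2 : d (N + m + 1) ≤ d (N + m) / s := by
          rw [le_div_iff₀ hs0]; linarith
        calc d (N + m + 1) ≤ d (N + m) / s := h2
          _ ≤ d N * (1 / s) ^ m / s := by gcongr
          _ = d N * (1 / s) ^ (m + 1) := by
              rw [pow_succ]; field_simp
      refine ⟨hd1, ?_⟩
      rw [heq]
      have hcpow : (0:ℝ) < c ^ (N + m) := pow_pos hc0 _
      have h3 : c ^ (N + m + 1) * d (N + m + 1)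
          ≤ c ^ (N + m) * d (N + m) * Real.exp (2 * L / c * d (N + m + 1)) := by
        rw [pow_succ]
        calc c ^ (N + m) * c * d (N + m + 1) = c ^ (N + m) * (c * d (N + m + 1)) := by ring
          _ ≤ c ^ (N + m) * (d (N + m) * Real.exp (2 * L / c * d (N + m + 1))) := by
              apply mul_le_mul_of_nonneg_left hst2' hcpow.le
          _ = c ^ (N + m) * d (N + m) * Real.exp (2 * L / c * d (N + m + 1)) := by ring
      have h4 : c ^ (N + m) * d (N + m) * Real.exp (2 * L / c * d (N + m + 1))
          ≤ c ^ N * d N * Real.exp (T * (1 - (1 / s) ^ m)) * Real.exp (2 * L / c * d (N + m + 1)) :=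
        mul_le_mul_of_nonneg_right ih2 (Real.exp_pos _).le
      have h5 : T * (1 - (1 / s) ^ m) + 2 * L / c * d (N + m + 1) ≤ T * (1 - (1 / s) ^ (m + 1)) := by
        have harg : T * ((1 / s) ^ m - (1 / s) ^ (m + 1)) = 2 * L / c * (d N * (1 / s) ^ (m + 1)) := by
          simp only [hT]
          rw [pow_succ]
          have hsne : s ≠ 0 := ne_of_gt hs0
          have hs1ne : s - 1 ≠ 0 := by intro h; simp only [hs] at *; linarith
          field_simp
        have h6 : 2 * L / c * d (N + m + 1) ≤ 2 * L / c * (d N * (1 / s) ^ (m + 1)) := by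
          apply mul_le_mul_of_nonneg_left _ (by positivity)
          rw [← heq]; exact hd1
        nlinarith [h6, harg]
      calc c ^ (N + m + 1) * d (N + m + 1)
          ≤ c ^ N * d N * Real.exp (T * (1 - (1 / s) ^ m)) * Real.exp (2 * L / c * d (N + m + 1)) :=
            le_trans h3 h4
        _ = c ^ N * d N * Real.exp (T * (1 - (1 / s) ^ m) + 2 * L / c * d (N + m + 1)) := by
            rw [Real.exp_add]; ring
        _ ≤ c ^ N * d N * Real.exp (T * (1 - (1 / s) ^ (m + 1))) := by
            apply mul_le_mul_of_nonneg_left (Real.exp_le_exp.mpr h5) (by positivity)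
  -- assemble the constant
  have hconv : ∀ n : ℕ, ‖μ ^ n * (q n - p)‖ = c ^ n * d n := by
    intro n
    rw [norm_mul, norm_pow]
  set D : ℝ := c ^ N * d N * Real.exp T with hD
  have hNrange : (Finset.range (N + 1)).Nonempty := ⟨0, by simp⟩
  set B : ℝ := (Finset.range (N + 1)).sup' hNrange (fun k => c ^ k * d k) with hB
  refine ⟨max B D, fun n => ?_⟩
  rw [hconv]
  rcases le_or_gt N n with hn | hn
  · obtain ⟨m, rfl⟩ := Nat.exists_eq_add_of_le hn
    have h1 := (hmain m).2
    have h2 : Real.exp (T * (1 - (1 / s) ^ m)) ≤ Real.exp T := by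
      apply Real.exp_le_exp.mpr
      have hu : (0:ℝ) ≤ (1 / s) ^ m := by positivity
      nlinarith
    have h3 : c ^ N * d N * Real.exp (T * (1 - (1 / s) ^ m)) ≤ D := by
      apply mul_le_mul_of_nonneg_left h2 (by positivity)
    exact le_trans (le_trans h1 h3) (le_max_right _ _)
  · refine le_trans ?_ (le_max_left _ _)
    exact Finset.le_sup' (fun k => c ^ k * d k) (Finset.mem_range.mpr (by omega))
end
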